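/- Let l > 0 and C ≥ 0 be real numbers, let A = {w ∈ ℍ : Re w = 0} be the imaginary axis of the upper half-plane, and consider the set S = {z ∈ ℍ : infDist(z, A) ≤ C and 1 ≤ |z| ≤ e^l}, where infDist is taken with respect to the hyperbolic metric and |z| is the Euclidean modulus of the coordinate of z. Then S is a compact subset of ℍ. (This expresses that the hyperbolic distance to the axis descends to a proper exhaustion function on the quotient of ℍ by the glide reflection z ↦ e^l·(−conj z), whose fundamental domain is the annulus 1 ≤ |z| ≤ e^l.) -/

import Mathlib

set_option maxHeartbeats 1000000


open UpperHalfPlane Complex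

/-- The imaginary axis in the upper half-plane. -/
def imaginaryAxis : Set ℍ := {w : ℍ | w.re = 0}

/-- For `l > 0` and `C ≥ 0`, the set of points of the upper half-plane lying at
hyperbolic distance at most `C` from the imaginary axis and with Euclidean modulus
between `1` and `e^l` (a fundamental domain condition for the glide reflection
`z ↦ e^l·(−conj z)`) is compact. -/
theorem tube_inter_fundamentalDomain_isCompact (l C : ℝ) (hl : 0 < l) (hC : 0 ≤ C) :
    IsCompact {z : ℍ | Metric.infDist z imaginaryAxis ≤ C ∧
      1 ≤ ‖(z : ℂ)‖ ∧ ‖(z : ℂ)‖ ≤ Real.exp l} := by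
  have hIax : UpperHalfPlane.I ∈ imaginaryAxis := by
    simp [imaginaryAxis, UpperHalfPlane.coe_re, UpperHalfPlane.coe_I]
  set K : ℝ := 2 * Real.sinh ((C + 1) / 2) with hK
  have hK0 : 0 ≤ K := by
    have : 0 ≤ Real.sinh ((C + 1) / 2) := Real.sinh_nonneg_iff.mpr (by linarith)
    positivity
  set N : ℝ := K ^ 2 * (K ^ 2 + 2) + 1 with hN
  have hN1 : 1 ≤ N := by nlinarith
  have hN0 : 0 < N := by linarith
  set δ : ℝ := 1 / N with hδ
  have hδ0 : 0 < δ := by positivity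
  set R : ℝ := 2 * Real.arsinh ((Real.exp l + 1) / (2 * Real.sqrt δ)) with hR
  clear_value K N δ R
  -- The set is closed.
  have hclosed : IsClosed {z : ℍ | Metric.infDist z imaginaryAxis ≤ C ∧
      1 ≤ ‖(z : ℂ)‖ ∧ ‖(z : ℂ)‖ ≤ Real.exp l} := by
    have hcont : Continuous fun z : ℍ => ‖(z : ℂ)‖ :=
      continuous_norm.comp UpperHalfPlane.continuous_coe
    have h1 : IsClosed {z : ℍ | Metric.infDist z imaginaryAxis ≤ C} :=
      isClosed_le (Metric.continuous_infDist_pt _) continuous_const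
    have h2 : IsClosed {z : ℍ | 1 ≤ ‖(z : ℂ)‖} :=
      isClosed_le continuous_const hcont
    have h3 : IsClosed {z : ℍ | ‖(z : ℂ)‖ ≤ Real.exp l} :=
      isClosed_le hcont continuous_const
    have : {z : ℍ | Metric.infDist z imaginaryAxis ≤ C ∧
        1 ≤ ‖(z : ℂ)‖ ∧ ‖(z : ℂ)‖ ≤ Real.exp l} =
        {z : ℍ | Metric.infDist z imaginaryAxis ≤ C} ∩
        ({z : ℍ | 1 ≤ ‖(z : ℂ)‖} ∩ {z : ℍ | ‖(z : ℂ)‖ ≤ Real.exp l}) := by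
      ext z; simp [Set.mem_inter_iff, and_assoc]
    rw [this]
    exact h1.inter (h2.inter h3)
  -- The set is contained in a closed ball around I.
  have hsub : {z : ℍ | Metric.infDist z imaginaryAxis ≤ C ∧
      1 ≤ ‖(z : ℂ)‖ ∧ ‖(z : ℂ)‖ ≤ Real.exp l} ⊆
      Metric.closedBall UpperHalfPlane.I R := by
    rintro z ⟨hzd, hz1, hzl⟩
    have hy : 0 < z.im := z.im_pos
    -- find a nearby axis point
    have hlt : Metric.infDist z imaginaryAxis < C + 1 := lt_of_le_of_lt hzd (by linarith)
    obtain ⟨w, hw, hwd⟩ := (Metric.infDist_lt_iff ⟨UpperHalfPlane.I, hIax⟩).mp hlt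
    have ht : 0 < w.im := w.im_pos
    have hwre : w.re = 0 := hw
    -- translate to the Euclidean estimate
    have hest : dist (z : ℂ) (w : ℂ) / (2 * Real.sqrt (z.im * w.im)) ≤
        Real.sinh ((C + 1) / 2) := by
      have := UpperHalfPlane.dist_le_iff_le_sinh.mp hwd.le
      exact this
    have hsq : 0 < Real.sqrt (z.im * w.im) := Real.sqrt_pos.mpr (by positivity)
    have hd : dist (z : ℂ) (w : ℂ) ≤ K * Real.sqrt (z.im * w.im) := by
      rw [div_le_iff₀ (by positivity)] at hest
      calc dist (z : ℂ) (w : ℂ) ≤ Real.sinh ((C + 1) / 2) * (2 * Real.sqrt (z.im * w.im)) := hest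
        _ = K * Real.sqrt (z.im * w.im) := by rw [hK]; ring
    have hd2 : dist (z : ℂ) (w : ℂ) ^ 2 ≤ K ^ 2 * (z.im * w.im) := by
      have h1 : (K * Real.sqrt (z.im * w.im)) ^ 2 = K ^ 2 * (z.im * w.im) := by
        rw [mul_pow, Real.sq_sqrt (by positivity)]
      nlinarith [dist_nonneg (x := (z : ℂ)) (y := (w : ℂ)), hd]
    -- components
    have hre : |z.re| ≤ dist (z : ℂ) (w : ℂ) := by
      have := Complex.abs_re_le_norm ((z : ℂ) - (w : ℂ))
      simpa [Complex.dist_eq, Complex.sub_re, UpperHalfPlane.coe_re, hwre] using this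
    have him : |z.im - w.im| ≤ dist (z : ℂ) (w : ℂ) := by
      have := Complex.abs_im_le_norm ((z : ℂ) - (w : ℂ))
      simpa [Complex.dist_eq, Complex.sub_im, UpperHalfPlane.coe_im] using this
    have hx2 : z.re ^ 2 ≤ K ^ 2 * (z.im * w.im) := by
      nlinarith [abs_nonneg z.re, _root_.sq_abs z.re]
    have htb : w.im ≤ (K ^ 2 + 2) * z.im := by
      nlinarith [_root_.sq_abs (z.im - w.im), abs_nonneg (z.im - w.im), him, hd2,
        dist_nonneg (x := (z : ℂ)) (y := (w : ℂ))]
    have hx2' : z.re ^ 2 ≤ K ^ 2 * (K ^ 2 + 2) * z.im ^ 2 := by nlinarith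
    -- lower bound on the imaginary part
    have habs : z.re ^ 2 + z.im ^ 2 = ‖(z : ℂ)‖ ^ 2 := by
      rw [Complex.sq_norm, Complex.normSq_apply]
      simp only [UpperHalfPlane.coe_re, UpperHalfPlane.coe_im]
      ring
    have hylb : δ ≤ z.im ^ 2 := by
      have h1 : 1 ≤ ‖(z : ℂ)‖ ^ 2 := by nlinarith [hz1]
      have h2 : 1 ≤ N * z.im ^ 2 := by nlinarith
      rw [hδ, div_le_iff₀ hN0]; linarith [h2]
    have hylb' : Real.sqrt δ ≤ z.im := by
      have := Real.sqrt_le_sqrt hylb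
      rwa [Real.sqrt_sq hy.le] at this
    -- bound the hyperbolic distance to I
    rw [Metric.mem_closedBall]
    rw [UpperHalfPlane.dist_le_iff_le_sinh]
    have hIim : (UpperHalfPlane.I : ℍ).im = 1 := by
      simp [UpperHalfPlane.coe_im, UpperHalfPlane.coe_I]
    rw [hIim, mul_one]
    have hsinh : Real.sinh (R / 2) = (Real.exp l + 1) / (2 * Real.sqrt δ) := by
      rw [hR]; rw [mul_div_cancel_left₀ _ (two_ne_zero)]; exact Real.sinh_arsinh _
    rw [hsinh]
    have hdI : dist (z : ℂ) (UpperHalfPlane.I : ℍ) ≤ Real.exp l + 1 := by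
      rw [UpperHalfPlane.coe_I, Complex.dist_eq]
      have h := norm_sub_le (z : ℂ) Complex.I
      simp only [Complex.norm_I] at h
      linarith
    have hsd : 0 < Real.sqrt δ := Real.sqrt_pos.mpr hδ0
    have hδ1 : δ ≤ 1 := by rw [hδ, div_le_one hN0]; linarith
    have hsδ1 : Real.sqrt δ ≤ 1 := by
      rw [show (1 : ℝ) = Real.sqrt 1 by simp]
      exact Real.sqrt_le_sqrt hδ1
    have hδy : δ ≤ z.im := by
      nlinarith [Real.sq_sqrt hδ0.le, hylb', Real.sqrt_nonneg δ]
    have hsy : Real.sqrt δ ≤ Real.sqrt z.im := Real.sqrt_le_sqrt hδy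
    gcongr
    all_goals first
      | linarith [Real.exp_pos l]
      | exact dist_nonneg
  exact (isCompact_closedBall UpperHalfPlane.I R).of_isClosed_subset hclosed hsub
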